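/- Let p ∈ ℕ, Σ ∈ S⁺ₙ, and let D : Sym(n) → Sym(n) be the (unique) solution map of the generalized Sylvester equation ∑_{j=0}^{p-1} Σ^{(p-1-j)/p} (DX) Σ^{j/p} = X (i.e., D is the differential of Σ ↦ Σ^{1/p}). Then for every symmetric X: p·tr(Σ^{-1/p}·DX) = tr(Σ⁻¹X). -/

import Mathlib

open Matrix Classical

/-- Real power of a symmetric (Hermitian) real matrix via its spectral
decomposition (junk value `0` otherwise). -/
noncomputable def matRpow {n : ℕ} (A : Matrix (Fin n) (Fin n) ℝ) (r : ℝ) :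
    Matrix (Fin n) (Fin n) ℝ :=
  if h : A.IsHermitian then
    (h.eigenvectorUnitary : Matrix (Fin n) (Fin n) ℝ) *
      Matrix.diagonal (fun i => (h.eigenvalues i) ^ r) *
      (star (h.eigenvectorUnitary : Matrix (Fin n) (Fin n) ℝ))
  else 0

lemma matRpow_def {n : ℕ} {S : Matrix (Fin n) (Fin n) ℝ} (h : S.IsHermitian) (r : ℝ) :
    matRpow S r = (h.eigenvectorUnitary : Matrix (Fin n) (Fin n) ℝ) *
      Matrix.diagonal (fun i => (h.eigenvalues i) ^ r) *
      star (h.eigenvectorUnitary : Matrix (Fin n) (Fin n) ℝ) := by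
  rw [matRpow, dif_pos h]

lemma matRpow_mul_matRpow {n : ℕ} {S : Matrix (Fin n) (Fin n) ℝ} (hS : S.PosDef) (a b : ℝ) :
    matRpow S a * matRpow S b = matRpow S (a + b) := by
  have h := hS.isHermitian
  rw [matRpow_def h, matRpow_def h, matRpow_def h]
  have hU : star (h.eigenvectorUnitary : Matrix (Fin n) (Fin n) ℝ) * h.eigenvectorUnitary = 1 :=
    Matrix.mem_unitaryGroup_iff'.mp h.eigenvectorUnitary.2
  have hv : ∀ i, (h.eigenvalues i) ^ a * (h.eigenvalues i) ^ b = (h.eigenvalues i) ^ (a + b) :=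
    fun i => (Real.rpow_add (hS.eigenvalues_pos i) a b).symm
  calc ((h.eigenvectorUnitary : Matrix (Fin n) (Fin n) ℝ) *
          Matrix.diagonal (fun i => (h.eigenvalues i) ^ a) *
          star (h.eigenvectorUnitary : Matrix (Fin n) (Fin n) ℝ)) *
        ((h.eigenvectorUnitary : Matrix (Fin n) (Fin n) ℝ) *
          Matrix.diagonal (fun i => (h.eigenvalues i) ^ b) *
          star (h.eigenvectorUnitary : Matrix (Fin n) (Fin n) ℝ))
      = (h.eigenvectorUnitary : Matrix (Fin n) (Fin n) ℝ) *
        (Matrix.diagonal (fun i => (h.eigenvalues i) ^ a) *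
          ((star (h.eigenvectorUnitary : Matrix (Fin n) (Fin n) ℝ) * h.eigenvectorUnitary) *
            (Matrix.diagonal (fun i => (h.eigenvalues i) ^ b) *
              star (h.eigenvectorUnitary : Matrix (Fin n) (Fin n) ℝ)))) := by
        simp only [mul_assoc]
    _ = (h.eigenvectorUnitary : Matrix (Fin n) (Fin n) ℝ) *
        Matrix.diagonal (fun i => (h.eigenvalues i) ^ (a + b)) *
        star (h.eigenvectorUnitary : Matrix (Fin n) (Fin n) ℝ) := by
        have hd : Matrix.diagonal (fun i => (h.eigenvalues i) ^ a) *
            (Matrix.diagonal (fun i => (h.eigenvalues i) ^ b) *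
              star (h.eigenvectorUnitary : Matrix (Fin n) (Fin n) ℝ))
            = Matrix.diagonal (fun i => (h.eigenvalues i) ^ (a + b)) *
              star (h.eigenvectorUnitary : Matrix (Fin n) (Fin n) ℝ) := by
          rw [← mul_assoc, Matrix.diagonal_mul_diagonal]
          simp only [hv]
        rw [hU, one_mul, mul_assoc, hd, ← mul_assoc]

lemma matRpow_one' {n : ℕ} {S : Matrix (Fin n) (Fin n) ℝ} (hS : S.PosDef) :
    matRpow S 1 = S := by
  have h := hS.isHermitian
  rw [matRpow_def h]
  simp only [Real.rpow_one]
  simpa using h.spectral_theorem.symm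

lemma matRpow_zero' {n : ℕ} {S : Matrix (Fin n) (Fin n) ℝ} (hS : S.PosDef) :
    matRpow S 0 = 1 := by
  have h := hS.isHermitian
  rw [matRpow_def h]
  have hU : (h.eigenvectorUnitary : Matrix (Fin n) (Fin n) ℝ) *
      star (h.eigenvectorUnitary : Matrix (Fin n) (Fin n) ℝ) = 1 :=
    Matrix.mem_unitaryGroup_iff.mp h.eigenvectorUnitary.2
  simp [Real.rpow_zero, hU]

lemma matRpow_neg_one' {n : ℕ} {S : Matrix (Fin n) (Fin n) ℝ} (hS : S.PosDef) :
    matRpow S (-1) = S⁻¹ := by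
  have h2 := matRpow_mul_matRpow hS (-1) 1
  rw [matRpow_one' hS, neg_add_cancel, matRpow_zero' hS] at h2
  exact (inv_eq_left_inv h2).symm

/-- If `D` solves the generalized Sylvester equation
`∑_{j=0}^{p-1} S^{(p-1-j)/p} (DX) S^{j/p} = X` (the differential of the p-th
root map at S), then `p·tr(S^{-1/p}·DX) = tr(S⁻¹X)` for every symmetric X. -/
theorem stmt13 (n : ℕ) (p : ℕ) (hp : 0 < p)
    (S : Matrix (Fin n) (Fin n) ℝ) (hS : S.PosDef)
    (D : Matrix (Fin n) (Fin n) ℝ → Matrix (Fin n) (Fin n) ℝ)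
    (hD : ∀ X : Matrix (Fin n) (Fin n) ℝ, X.IsSymm →
      ∑ j ∈ Finset.range p,
        matRpow S (((p : ℝ) - 1 - j) / p) * D X * matRpow S ((j : ℝ) / p) = X) :
    ∀ X : Matrix (Fin n) (Fin n) ℝ, X.IsSymm →
      (p : ℝ) * (matRpow S (-(1 / p)) * D X).trace = (S⁻¹ * X).trace := by
  intro X hX
  have hp' : (p : ℝ) ≠ 0 := Nat.cast_ne_zero.mpr hp.ne'
  have key : ∀ j ∈ Finset.range p,
      (S⁻¹ * (matRpow S (((p : ℝ) - 1 - j) / p) * D X * matRpow S ((j : ℝ) / p))).trace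
        = (matRpow S (-(1 / p)) * D X).trace := by
    intro j _
    have he : (j : ℝ) / p + -1 + ((p : ℝ) - 1 - j) / p = -(1 / p) := by
      field_simp
      ring
    rw [← matRpow_neg_one' hS]
    have assoc1 : matRpow S (-1) * (matRpow S (((p : ℝ) - 1 - j) / p) * D X * matRpow S ((j : ℝ) / p))
        = (matRpow S (-1) * matRpow S (((p : ℝ) - 1 - j) / p) * D X) * matRpow S ((j : ℝ) / p) := by
      simp only [mul_assoc]
    rw [assoc1, Matrix.trace_mul_comm, ← mul_assoc, ← mul_assoc,
      matRpow_mul_matRpow hS, matRpow_mul_matRpow hS, he]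
  calc (p : ℝ) * (matRpow S (-(1 / p)) * D X).trace
      = ∑ _j ∈ Finset.range p, (matRpow S (-(1 / p)) * D X).trace := by
        rw [Finset.sum_const, Finset.card_range, nsmul_eq_mul]
    _ = ∑ j ∈ Finset.range p,
        (S⁻¹ * (matRpow S (((p : ℝ) - 1 - j) / p) * D X * matRpow S ((j : ℝ) / p))).trace := by
        exact (Finset.sum_congr rfl key).symm
    _ = (S⁻¹ * X).trace := by
        rw [← Matrix.trace_sum, ← Finset.mul_sum, hD X hX]
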